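/- Let M be a compact metric space whose covering numbers satisfy N(M,d,ε) ≤ a·ε^{−m} for all 0 < ε < δ. Let F be the set of functions f : M → ℝ that are 1-Lipschitz with 0 ≤ f ≤ K. Then there is a constant c > 0 such that for all 0 < ε < δ, the covering number of F in the uniform norm satisfies N(F, ‖·‖_∞, ε) ≤ exp(c/ε^m). -/

import Mathlib

lemma refine_net {M : Type*} [MetricSpace M]
    (F : Set (M → ℝ)) (hF : ∀ f ∈ F, LipschitzWith 1 f)
    (T' : Finset (M → ℝ)) (R ε : ℝ) (hε : 0 < ε)
    (hT' : ∀ f ∈ F, ∃ g ∈ T', ∀ x, |f x - g x| ≤ R)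
    (s : Finset M) (hs : ∀ x : M, ∃ y ∈ s, dist x y ≤ ε / 2)
    (D : ℕ) (hD : R / (ε / 2) + 1 / 2 ≤ (D : ℝ)) :
    ∃ T : Finset (M → ℝ), T.card ≤ T'.card * (2 * D + 1) ^ s.card ∧
      ∀ f ∈ F, ∃ h ∈ T, ∀ x, |f x - h x| ≤ ε := by
  classical
  have hε2 : (0:ℝ) < ε / 2 := by linarith
  have hp : ∀ x : M, ∃ y : ↥s, dist x (y : M) ≤ ε / 2 := by
    intro x
    obtain ⟨y, hy, hd⟩ := hs x
    exact ⟨⟨y, hy⟩, hd⟩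
  choose p hp' using hp
  set decode : (M → ℝ) × (↥s → ℤ) → (M → ℝ) :=
    fun gφ x => gφ.1 (p x : M) + (gφ.2 (p x) : ℝ) * (ε / 2) with hdec
  refine ⟨(T' ×ˢ Fintype.piFinset fun _ : ↥s => Finset.Icc (-(D:ℤ)) (D:ℤ)).image decode, ?_, ?_⟩
  · refine Finset.card_image_le.trans ?_
    rw [Finset.card_product, Fintype.card_piFinset]
    have hIcc : (Finset.Icc (-(D:ℤ)) (D:ℤ)).card = 2 * D + 1 := by
      rw [Int.card_Icc]; omega
    simp [hIcc, Finset.prod_const, Fintype.card_coe]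
  · intro f hf
    obtain ⟨g, hgT, hg⟩ := hT' f hf
    set φ : ↥s → ℤ := fun y => round ((f y - g y) / (ε / 2)) with hφ
    have hmem : φ ∈ Fintype.piFinset fun _ : ↥s => Finset.Icc (-(D:ℤ)) (D:ℤ) := by
      rw [Fintype.mem_piFinset]
      intro y
      have habs : |((φ y : ℤ) : ℝ)| ≤ (D : ℝ) := by
        set t : ℝ := (f y - g y) / (ε / 2) with ht
        have h1 : |((round t : ℤ) : ℝ) - t| ≤ 1 / 2 := by
          rw [abs_sub_comm]; exact abs_sub_round t
        have h2 : |t| ≤ R / (ε / 2) := by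
          rw [ht, abs_div, abs_of_pos hε2]
          exact div_le_div_of_nonneg_right (hg y) hε2.le
        have h3 : |((round t : ℤ) : ℝ)| ≤ |t| + 1 / 2 := by
          calc |((round t : ℤ) : ℝ)| = |(((round t : ℤ) : ℝ) - t) + t| := by ring_nf
            _ ≤ |((round t : ℤ) : ℝ) - t| + |t| := abs_add_le _ _
            _ ≤ |t| + 1 / 2 := by linarith
        have : (φ y : ℝ) = ((round t : ℤ) : ℝ) := by rw [hφ, ht]
        rw [this]
        linarith
      rw [Finset.mem_Icc]
      constructor
      · exact_mod_cast neg_le_of_abs_le habs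
      · exact_mod_cast le_of_abs_le habs
    refine ⟨decode (g, φ), Finset.mem_image_of_mem _ (Finset.mem_product.mpr ⟨hgT, hmem⟩), ?_⟩
    intro x
    set y := p x
    have h1 : |f x - f (y : M)| ≤ ε / 2 := by
      have := (hF f hf).dist_le_mul x (y : M)
      rw [Real.dist_eq] at this
      simpa using this.trans (by simpa using hp' x)
    have h2 : |f (y : M) - decode (g, φ) x| ≤ ε / 4 := by
      have hne : (ε / 2) ≠ 0 := ne_of_gt hε2
      have : f (y : M) - decode (g, φ) x
          = ((f (y : M) - g (y : M)) / (ε / 2) - (φ y : ℝ)) * (ε / 2) := by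
        simp only [hdec]
        field_simp
        ring
      rw [this, abs_mul, abs_of_pos hε2]
      have h3 : |(f (y : M) - g (y : M)) / (ε / 2) - (φ y : ℝ)| ≤ 1 / 2 := by
        exact_mod_cast abs_sub_round ((f (y : M) - g (y : M)) / (ε / 2))
      nlinarith
    calc |f x - decode (g, φ) x| ≤ |f x - f (y : M)| + |f (y : M) - decode (g, φ) x| :=
          abs_sub_le _ _ _
      _ ≤ ε / 2 + ε / 4 := add_le_add h1 h2
      _ ≤ ε := by linarith

theorem covering_number_lipschitz_ball
    {M : Type*} [MetricSpace M] [CompactSpace M]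
    (a δ K : ℝ) (m : ℕ) (ha : 0 < a) (hδ : 0 < δ) (hK : 0 < K) (hm : 0 < m)
    (hcov : ∀ ε : ℝ, 0 < ε → ε < δ → ∃ s : Finset M,
      (s.card : ℝ) ≤ a / ε ^ m ∧ ∀ x : M, ∃ y ∈ s, dist x y ≤ ε) :
    ∃ c : ℝ, 0 < c ∧ ∀ ε : ℝ, 0 < ε → ε < δ →
      ∃ T : Finset (M → ℝ), (T.card : ℝ) ≤ Real.exp (c / ε ^ m) ∧
        ∀ f : M → ℝ, (LipschitzWith 1 f ∧ ∀ x, f x ∈ Set.Icc 0 K) →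
          ∃ g ∈ T, ∀ x, |f x - g x| ≤ ε := by
  classical
  set F : Set (M → ℝ) := {f | LipschitzWith 1 f ∧ ∀ x, f x ∈ Set.Icc 0 K} with hFdef
  have hF : ∀ f ∈ F, LipschitzWith 1 f := fun f hf => hf.1
  set N₀ : ℕ := ⌈a * 4 ^ m / δ ^ m⌉₊ with hN₀
  set D₀ : ℕ := ⌈4 * K / δ⌉₊ + 1 with hD₀
  have hδm : (0:ℝ) < δ ^ m := pow_pos hδ m
  have hlog₀ : (0:ℝ) ≤ Real.log (2 * D₀ + 1) := by
    refine Real.log_nonneg ?_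
    have : (0:ℝ) ≤ (D₀ : ℝ) := Nat.cast_nonneg _
    linarith
  have hlog11 : (0:ℝ) ≤ Real.log 11 := Real.log_nonneg (by norm_num)
  set c : ℝ := δ ^ m * ((N₀ : ℝ) * Real.log (2 * D₀ + 1)) + a * 2 ^ (m + 1) * Real.log 11 + 1
    with hc
  have hcpos : 0 < c := by
    have h1 : 0 ≤ δ ^ m * ((N₀ : ℝ) * Real.log (2 * D₀ + 1)) :=
      mul_nonneg hδm.le (mul_nonneg (Nat.cast_nonneg _) hlog₀)
    have h2 : 0 ≤ a * 2 ^ (m + 1) * Real.log 11 :=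
      mul_nonneg (mul_nonneg ha.le (by positivity)) hlog11
    rw [hc]; linarith
  refine ⟨c, hcpos, ?_⟩
  -- key induction over dyadic scales
  have key : ∀ k : ℕ, ∀ ε : ℝ, 0 < ε → ε < δ → δ / 2 ^ (k + 1) ≤ ε →
      ∃ T : Finset (M → ℝ), (T.card : ℝ) ≤ Real.exp (c / ε ^ m) ∧
        ∀ f ∈ F, ∃ g ∈ T, ∀ x, |f x - g x| ≤ ε := by
    intro k
    induction k with
    | zero =>
      intro ε hε hεδ hlow
      have hεδ2 : δ / 2 ≤ ε := by
        simpa using hlow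
      obtain ⟨s, hscard, hsnet⟩ := hcov (ε / 2) (by linarith) (by linarith)
      have hT0 : ∀ f ∈ F, ∃ g ∈ ({fun _ : M => (0:ℝ)} : Finset (M → ℝ)), ∀ x, |f x - g x| ≤ K := by
        intro f hf
        refine ⟨_, Finset.mem_singleton_self _, fun x => ?_⟩
        have := hf.2 x
        rw [Set.mem_Icc] at this
        rw [abs_sub_comm]
        rw [abs_le]
        constructor <;> simp <;> linarith [this.1, this.2]
      have hDbound : K / (ε / 2) + 1 / 2 ≤ (D₀ : ℝ) := by
        have h1 : K / (ε / 2) ≤ 4 * K / δ := by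
          rw [div_le_div_iff₀ (by linarith) hδ]
          nlinarith
        have h2 : (4 * K / δ : ℝ) ≤ (⌈4 * K / δ⌉₊ : ℕ) := Nat.le_ceil _
        have : ((D₀ : ℕ) : ℝ) = (⌈4 * K / δ⌉₊ : ℝ) + 1 := by rw [hD₀]; push_cast; ring
        rw [this]
        linarith
      obtain ⟨T, hTcard, hTnet⟩ := refine_net F hF {fun _ : M => (0:ℝ)} K ε hε hT0 s hsnet D₀
        hDbound
      refine ⟨T, ?_, hTnet⟩
      have hscard' : s.card ≤ N₀ := by
        have h1 : (s.card : ℝ) ≤ a * 4 ^ m / δ ^ m := by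
          refine hscard.trans ?_
          rw [div_le_div_iff₀ (by positivity) hδm]
          have : (ε / 2) ^ m * (4:ℝ) ^ m = (2 * ε) ^ m := by
            rw [← mul_pow]; congr 1; ring
          calc a * δ ^ m ≤ a * ((ε / 2) ^ m * 4 ^ m) := by
                rw [this]
                refine mul_le_mul_of_nonneg_left ?_ ha.le
                exact pow_le_pow_left₀ hδ.le (by linarith) m
            _ = a * 4 ^ m * (ε / 2) ^ m := by ring
        have h2 : (s.card : ℝ) ≤ (N₀ : ℝ) := h1.trans (Nat.le_ceil _)
        exact_mod_cast h2
      have hcard2 : (T.card : ℝ) ≤ ((2 * D₀ + 1 : ℕ) : ℝ) ^ (N₀ : ℕ) := by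
        have : T.card ≤ (2 * D₀ + 1) ^ N₀ := by
          refine hTcard.trans ?_
          simpa using Nat.pow_le_pow_right (by omega) hscard'
        exact_mod_cast this
      refine hcard2.trans ?_
      have heq : ((2 * D₀ + 1 : ℕ) : ℝ) ^ (N₀ : ℕ)
          = Real.exp ((N₀ : ℝ) * Real.log (2 * D₀ + 1)) := by
        rw [← Real.log_pow, Real.exp_log (by positivity)]
        push_cast
        norm_num
      rw [heq, Real.exp_le_exp]
      have h3 : (N₀ : ℝ) * Real.log (2 * D₀ + 1) ≤ c / δ ^ m := by
        rw [le_div_iff₀ hδm, hc]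
        have hrest : 0 ≤ a * 2 ^ (m + 1) * Real.log 11 :=
          mul_nonneg (mul_nonneg ha.le (by positivity)) hlog11
        nlinarith [hrest]
      refine h3.trans ?_
      refine div_le_div_of_nonneg_left hcpos.le (pow_pos hε m) ?_
      exact pow_le_pow_left₀ hε.le hεδ.le m
    | succ k ih =>
      intro ε hε hεδ hlow
      by_cases hcase : δ / 2 ^ (k + 1) ≤ ε
      · exact ih ε hε hεδ hcase
      push_neg at hcase
      have h2k : (1:ℝ) ≤ 2 ^ k := one_le_pow₀ (by norm_num : (1:ℝ) ≤ 2)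
      have h2ε : 0 < 2 * ε := by linarith
      have h2εδ : 2 * ε < δ := by
        have : ε < δ / 2 ^ (k + 1) := hcase
        have h1 : δ / 2 ^ (k + 1) ≤ δ / 2 := by
          refine div_le_div_of_nonneg_left hδ.le (by norm_num) ?_
          calc (2:ℝ) = 2 ^ 1 := by norm_num
            _ ≤ 2 ^ (k + 1) := pow_le_pow_right₀ (by norm_num) (by omega)
        linarith
      have h2low : δ / 2 ^ (k + 1) ≤ 2 * ε := by
        have : δ / 2 ^ (k + 2) ≤ ε := hlow
        have heq : δ / 2 ^ (k + 1) = 2 * (δ / 2 ^ (k + 2)) := by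
          rw [pow_succ]
          field_simp
          ring
        rw [heq]
        linarith
      obtain ⟨T', hT'card, hT'net⟩ := ih (2 * ε) h2ε h2εδ h2low
      obtain ⟨s, hscard, hsnet⟩ := hcov (ε / 2) (by linarith) (by linarith)
      have hDb : 2 * ε / (ε / 2) + 1 / 2 ≤ ((5 : ℕ) : ℝ) := by
        have h4 : 2 * ε / (ε / 2) = 4 := by
          rw [div_eq_iff (show (ε:ℝ)/2 ≠ 0 by positivity)]
          ring
        rw [h4]
        norm_num
      have hT'net' : ∀ f ∈ F, ∃ g ∈ T', ∀ x, |f x - g x| ≤ 2 * ε := hT'net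
      obtain ⟨T, hTcard, hTnet⟩ := refine_net F hF T' (2 * ε) ε hε hT'net' s hsnet 5 hDb
      refine ⟨T, ?_, hTnet⟩
      have hεm : (0:ℝ) < ε ^ m := pow_pos hε m
      have hcard : (T.card : ℝ) ≤ Real.exp (c / (2 * ε) ^ m) * (11 : ℝ) ^ s.card := by
        have h1 : (T.card : ℝ) ≤ (T'.card : ℝ) * (11 : ℝ) ^ s.card := by
          have := hTcard
          norm_num at this
          exact_mod_cast Nat.cast_le.mpr this |>.trans_eq (by push_cast; ring)
        refine h1.trans ?_
        exact mul_le_mul_of_nonneg_right hT'card (by positivity)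
      refine hcard.trans ?_
      have h11 : ((11:ℝ)) ^ s.card = Real.exp ((s.card : ℝ) * Real.log 11) := by
        rw [← Real.log_pow, Real.exp_log (by positivity)]
      rw [h11, ← Real.exp_add, Real.exp_le_exp]
      -- c/(2ε)^m + s.card * log 11 ≤ c/ε^m
      have hsc : (s.card : ℝ) * Real.log 11 ≤ (a * 2 ^ m / ε ^ m) * Real.log 11 := by
        refine mul_le_mul_of_nonneg_right (hscard.trans (le_of_eq ?_)) hlog11
        rw [div_pow, div_div_eq_mul_div]
      have hmain : c / (2 * ε) ^ m + (a * 2 ^ m / ε ^ m) * Real.log 11 ≤ c / ε ^ m := by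
        rw [mul_pow]
        have h2m : (2:ℝ) ≤ 2 ^ m := by
          calc (2:ℝ) = 2 ^ 1 := by norm_num
            _ ≤ 2 ^ m := pow_le_pow_right₀ (by norm_num) hm
        have h2mp : (0:ℝ) < 2 ^ m := by positivity
        have e1 : c / (2 ^ m * ε ^ m) = (c / 2 ^ m) / ε ^ m := by
          rw [div_div]
        have e2 : (a * 2 ^ m / ε ^ m) * Real.log 11 = (a * 2 ^ m * Real.log 11) / ε ^ m := by
          ring
        rw [e1, e2, ← add_div, div_le_div_iff₀ hεm hεm]
        have hc1 : c / 2 ^ m ≤ c / 2 := by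
          exact div_le_div_of_nonneg_left hcpos.le (by norm_num) h2m
        have hc2 : a * 2 ^ m * Real.log 11 ≤ c / 2 := by
          have : a * 2 ^ (m + 1) * Real.log 11 ≤ c := by
            rw [hc]
            have h0 : (0:ℝ) ≤ δ ^ m * ((N₀ : ℝ) * Real.log (2 * D₀ + 1)) :=
              mul_nonneg hδm.le (mul_nonneg (Nat.cast_nonneg _) hlog₀)
            linarith
          rw [pow_succ] at this
          linarith [this]
        have hsum : c / 2 ^ m + a * 2 ^ m * Real.log 11 ≤ c := by linarith
        exact mul_le_mul_of_nonneg_right hsum hεm.le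
      calc c / (2 * ε) ^ m + (s.card : ℝ) * Real.log 11
          ≤ c / (2 * ε) ^ m + (a * 2 ^ m / ε ^ m) * Real.log 11 := by linarith
        _ ≤ c / ε ^ m := hmain
  -- conclude
  intro ε hε hεδ
  obtain ⟨k, hk⟩ := pow_unbounded_of_one_lt (δ / ε) (show (1:ℝ) < 2 by norm_num)
  have hlow : δ / 2 ^ (k + 1) ≤ ε := by
    rw [div_le_iff₀ (by positivity)]
    have : δ / ε < 2 ^ k := hk
    rw [div_lt_iff₀ hε] at this
    have h1 : (2:ℝ) ^ k ≤ 2 ^ (k + 1) := pow_le_pow_right₀ (by norm_num) (by omega)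
    nlinarith [pow_pos (show (0:ℝ) < 2 by norm_num) k]
  obtain ⟨T, h1, h2⟩ := key k ε hε hεδ hlow
  exact ⟨T, h1, fun f hf => h2 f hf⟩
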